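/- arXiv:2106.11753 — 2 statements merged into one kernel-verified Lean document; each statement's English description precedes it below -/
import Mathlib

section
/- First-order error of the symplectic Euler modified Hamiltonian (harmonic oscillator): there exist constants C > 0 and h₀ > 0 such that for all h with 0 < h < h₀ and all (p,q) ∈ ℝ², the modified Hamiltonian Ĥ_SE(p,q) = (sin h·(p² + q²)/2 + (1 − cos h)·p·q)/(h·cos h) satisfies |Ĥ_SE(p,q) − (p² + q²)/2| ≤ C·h·(p² + q²). -/
noncomputable section

/-- The modified Hamiltonian of the symplectic Euler method with step `h` for the
harmonic oscillator. -/
def HSE (h p q : ℝ) : ℝ :=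
  (Real.sin h * (p ^ 2 + q ^ 2) / 2 + (1 - Real.cos h) * p * q) / (h * Real.cos h)

/-- first-order error of the symplectic Euler modified Hamiltonian for the
harmonic oscillator: `|Ĥ_SE(p,q) − (p² + q²)/2| ≤ C·h·(p² + q²)` for all small `h > 0`. -/
theorem stmt13 :
    ∃ C > (0 : ℝ), ∃ h₀ > (0 : ℝ), ∀ h : ℝ, 0 < h → h < h₀ → ∀ p q : ℝ,
      |HSE h p q - (p ^ 2 + q ^ 2) / 2| ≤ C * h * (p ^ 2 + q ^ 2) := by
  refine ⟨1, one_pos, 1, one_pos, fun h hp hlt p q => ?_⟩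
  have hsle : Real.sin h ≤ h := Real.sin_le hp.le
  have hsge : h - h ^ 3 / 4 < Real.sin h := by have := Real.sin_gt_sub_cube hp; nlinarith [pow_pos hp 3]
  have hcle : Real.cos h ≤ 1 := Real.cos_le_one h
  have hcge : 1 - h ^ 2 / 2 ≤ Real.cos h := Real.one_sub_sq_div_two_le_cos
  have hc2 : (1:ℝ)/2 < Real.cos h := by nlinarith
  have hhc : 0 < h * Real.cos h := by positivity
  have hne : h * Real.cos h ≠ 0 := ne_of_gt hhc

  have hS : (0:ℝ) ≤ p ^ 2 + q ^ 2 := by positivity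
  have t1 := mul_nonneg (show (0:ℝ) ≤ h^3/2 - (Real.sin h - h * Real.cos h) by nlinarith) hS
  have t2 := mul_nonneg (show (0:ℝ) ≤ (Real.sin h - h * Real.cos h) + h^3/4 by nlinarith) hS
  have t3 := mul_nonneg (show (0:ℝ) ≤ 1 - Real.cos h by nlinarith [Real.cos_le_one h]) (sq_nonneg (p-q))
  have t4 := mul_nonneg (show (0:ℝ) ≤ 1 - Real.cos h by nlinarith [Real.cos_le_one h]) (sq_nonneg (p+q))
  have t5 := mul_nonneg (show (0:ℝ) ≤ h^2/2 - (1 - Real.cos h) by nlinarith) hS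
  have t6 := mul_nonneg (show (0:ℝ) ≤ Real.cos h - 1/2 by nlinarith) (mul_nonneg (mul_nonneg hp.le hp.le) hS)
  have t7 := mul_nonneg (show (0:ℝ) ≤ 1 - h by linarith) (mul_nonneg (mul_nonneg hp.le hp.le) hS)
  rw [abs_le]
  constructor
  · rw [HSE, neg_le_sub_iff_le_add, ← sub_le_iff_le_add, le_div_iff₀ hhc]
    nlinarith [t1, t2, t3, t4, t5, t6, t7]
  · rw [HSE, sub_le_iff_le_add, div_le_iff₀ hhc]
    linarith [t1, t3, t5, t6, t7]
end
end

section
/- The post-training correction raises the order of the symplectic Euler modified Hamiltonian from one to two (harmonic oscillator instance of the correction formula H = Ĥ − (h/2)·∇_pĤ·∇_qĤ + O(h²)): let Ĥ_SE(p,q) = (sin h·(p² + q²)/2 + (1 − cos h)·p·q)/(h·cos h) and define the corrected Hamiltonian Ĥ_corr(p,q) = Ĥ_SE(p,q) − (h/2)·(∂Ĥ_SE/∂p)(p,q)·(∂Ĥ_SE/∂q)(p,q). Then there exist constants C > 0 and h₀ > 0 such that for all 0 < h < h₀ and all (p,q) ∈ ℝ², |Ĥ_corr(p,q) − (p² + q²)/2|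 ≤ C·h²·(p² + q²). -/
noncomputable section

/-- The corrected Hamiltonian `Ĥ_corr = Ĥ_SE − (h/2)·(∂Ĥ_SE/∂p)·(∂Ĥ_SE/∂q)`. -/
def Hcorr (h p q : ℝ) : ℝ :=
  HSE h p q - (h / 2) * deriv (fun P => HSE h P q) p * deriv (fun Q => HSE h p Q) q

lemma deriv_p (h p q : ℝ) :
    deriv (fun P => HSE h P q) p
      = (Real.sin h * p + (1 - Real.cos h) * q) / (h * Real.cos h) := by
  have h1 : HasDerivAt (fun P : ℝ =>
      (Real.sin h * (P ^ 2 + q ^ 2) / 2 + (1 - Real.cos h) * P * q))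
      (Real.sin h * (2 * p ^ 1) / 2 + (1 - Real.cos h) * q) p := by
    have hp : HasDerivAt (fun P : ℝ => Real.sin h * (P ^ 2 + q ^ 2) / 2)
        (Real.sin h * (2 * p ^ 1) / 2) p :=
      (((hasDerivAt_pow 2 p).add_const (q ^ 2)).const_mul (Real.sin h)).div_const 2
    have hq : HasDerivAt (fun P : ℝ => (1 - Real.cos h) * P * q)
        ((1 - Real.cos h) * q) p := by
      have := ((hasDerivAt_id p).const_mul (1 - Real.cos h)).mul_const q
      simpa [mul_comm, mul_assoc] using this
    exact hp.add hq
  have h2 := (h1.div_const (h * Real.cos h)).deriv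
  rw [show (fun P => HSE h P q) = (fun P : ℝ =>
      (Real.sin h * (P ^ 2 + q ^ 2) / 2 + (1 - Real.cos h) * P * q) / (h * Real.cos h))
      from rfl, h2]
  ring

lemma deriv_q (h p q : ℝ) :
    deriv (fun Q => HSE h p Q) q
      = (Real.sin h * q + (1 - Real.cos h) * p) / (h * Real.cos h) := by
  have h1 : HasDerivAt (fun Q : ℝ =>
      (Real.sin h * (p ^ 2 + Q ^ 2) / 2 + (1 - Real.cos h) * p * Q))
      (Real.sin h * (2 * q ^ 1) / 2 + (1 - Real.cos h) * p) q := by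
    have hp : HasDerivAt (fun Q : ℝ => Real.sin h * (p ^ 2 + Q ^ 2) / 2)
        (Real.sin h * (2 * q ^ 1) / 2) q :=
      ((((hasDerivAt_pow 2 q).const_add (p ^ 2)).const_mul (Real.sin h)).div_const 2)
    have hq : HasDerivAt (fun Q : ℝ => (1 - Real.cos h) * p * Q)
        ((1 - Real.cos h) * p) q := by
      simpa using (hasDerivAt_id q).const_mul ((1 - Real.cos h) * p)
    exact hp.add hq
  have h2 := (h1.div_const (h * Real.cos h)).deriv
  rw [show (fun Q => HSE h p Q) = (fun Q : ℝ =>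
      (Real.sin h * (p ^ 2 + Q ^ 2) / 2 + (1 - Real.cos h) * p * Q) / (h * Real.cos h))
      from rfl, h2]
  ring

lemma key_identity (h p q : ℝ) (hh : h ≠ 0) (hc : Real.cos h ≠ 0) :
    Hcorr h p q - (p ^ 2 + q ^ 2) / 2
      = (Real.sin h * (2 * Real.cos h - 1) - h * Real.cos h ^ 2) / (2 * h * Real.cos h ^ 2)
          * (p ^ 2 + q ^ 2)
        + (-(1 - Real.cos h) ^ 2 / (h * Real.cos h ^ 2)) * (p * q) := by
  have hs : Real.sin h ^ 2 = 1 - Real.cos h ^ 2 := by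
    nlinarith [Real.sin_sq_add_cos_sq h]
  unfold Hcorr
  rw [deriv_p, deriv_q]
  unfold HSE
  field_simp
  ring_nf
  linear_combination (-p*q) * hs

set_option maxHeartbeats 1000000 in
/-- the post-training correction raises the order of the symplectic Euler
modified Hamiltonian from one to two (harmonic oscillator):
`|Ĥ_corr(p,q) − (p² + q²)/2` ≤ C·h²·(p² + q²)` for all small `h > 0`. -/
theorem stmt15 :
    ∃ C > (0 : ℝ), ∃ h₀ > (0 : ℝ), ∀ h : ℝ, 0 < h → h < h₀ → ∀ p q : ℝ,
      |Hcorr h p q - (p ^ 2 + q ^ 2) / 2| ≤ C * h ^ 2 * (p ^ 2 + q ^ 2) := by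
  refine ⟨2, by norm_num, 1/2, by norm_num, ?_⟩
  intro h hpos hlt p q
  have hh1 : |h| ≤ 1 := by rw [abs_of_pos hpos]; linarith
  have hcl : (3:ℝ)/4 ≤ Real.cos h := by
    have := Real.one_sub_sq_div_two_le_cos (x := h)
    nlinarith
  have hcu : Real.cos h ≤ 1 := Real.cos_le_one h
  have hc : Real.cos h ≠ 0 := by linarith
  have hh : h ≠ 0 := ne_of_gt hpos
  have h4le : h ^ 4 ≤ h ^ 3 / 2 := by nlinarith [pow_pos hpos 3]
  -- sin bound
  have hsin := Real.sin_bound hh1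
  rw [abs_of_pos hpos] at hsin
  have hsin' : |Real.sin h - h| ≤ h ^ 3 / 4 := by
    have htri : |Real.sin h - h| ≤ |Real.sin h - (h - h ^ 3 / 6)| + |(-(h ^ 3 / 6) : ℝ)| := by
      rw [show Real.sin h - h = (Real.sin h - (h - h ^ 3 / 6)) + (-(h ^ 3 / 6)) by ring]
      exact abs_add_le _ _
    rw [abs_neg, abs_of_pos (show (0:ℝ) < h ^ 3 / 6 by positivity)] at htri
    have h5le : h ^ 5 ≤ h ^ 3 / 2 := by nlinarith [pow_pos hpos 3, pow_pos hpos 4]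
    linarith [(pow_pos hpos 3).le]
  -- 1 - cos bound
  have hcos' : 1 - Real.cos h ≤ h ^ 2 / 2 := by
    have := Real.one_sub_sq_div_two_le_cos (x := h); linarith
  have hcos0 : 0 ≤ 1 - Real.cos h := by linarith
  have hcsq : (1 - Real.cos h) ^ 2 ≤ h ^ 4 / 4 := by nlinarith
  set A : ℝ := (Real.sin h * (2 * Real.cos h - 1) - h * Real.cos h ^ 2) / (2 * h * Real.cos h ^ 2)
    with hA
  set B : ℝ := -(1 - Real.cos h) ^ 2 / (h * Real.cos h ^ 2) with hB
  have hid := key_identity h p q hh hc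
  have hc2 : (9:ℝ)/16 ≤ Real.cos h ^ 2 := by nlinarith
  -- numerator bound for A
  have hNA : |Real.sin h * (2 * Real.cos h - 1) - h * Real.cos h ^ 2| ≤ h ^ 3 / 2 := by
    have e1 : Real.sin h * (2 * Real.cos h - 1) - h * Real.cos h ^ 2
        = (Real.sin h - h) * (2 * Real.cos h - 1) - h * (Real.cos h - 1) ^ 2 := by ring
    rw [e1]
    have b1 : |(Real.sin h - h) * (2 * Real.cos h - 1)| ≤ h ^ 3 / 4 := by
      rw [abs_mul]
      have hb : |2 * Real.cos h - 1| ≤ 1 := by rw [abs_le]; constructor <;> nlinarith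
      nlinarith [abs_nonneg (Real.sin h - h), hsin']
    have b2 : |h * (Real.cos h - 1) ^ 2| ≤ h ^ 3 / 4 := by
      rw [abs_mul, abs_of_pos hpos, abs_of_nonneg (sq_nonneg _)]
      have e2 : (Real.cos h - 1) ^ 2 = (1 - Real.cos h) ^ 2 := by ring
      rw [e2]
      have : h * (1 - Real.cos h) ^ 2 ≤ h * (h ^ 4 / 4) :=
        mul_le_mul_of_nonneg_left hcsq hpos.le
      have h5 : h * (h ^ 4 / 4) ≤ h ^ 3 / 4 := by nlinarith [pow_pos hpos 3]
      linarith
    calc |(Real.sin h - h) * (2 * Real.cos h - 1) - h * (Real.cos h - 1) ^ 2|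
        ≤ |(Real.sin h - h) * (2 * Real.cos h - 1)| + |h * (Real.cos h - 1) ^ 2| :=
          abs_sub _ _
      _ ≤ h ^ 3 / 2 := by linarith
  have hAb : |A| ≤ h ^ 2 := by
    rw [hA, abs_div]
    have hden : |2 * h * Real.cos h ^ 2| = 2 * h * Real.cos h ^ 2 := by
      apply abs_of_pos; positivity
    rw [hden, div_le_iff₀ (by positivity)]
    have e3 : h ^ 2 * (2 * h * Real.cos h ^ 2) = 2 * (h ^ 3 * Real.cos h ^ 2) := by ring
    have l3 : h ^ 3 * (9/16) ≤ h ^ 3 * Real.cos h ^ 2 :=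
      mul_le_mul_of_nonneg_left hc2 (pow_pos hpos 3).le
    rw [e3]; linarith [(pow_pos hpos 3).le]
  have hBb : |B| ≤ 2 * h ^ 2 := by
    rw [hB, abs_div, abs_neg, abs_of_nonneg (sq_nonneg (1 - Real.cos h))]
    have hden : |h * Real.cos h ^ 2| = h * Real.cos h ^ 2 := by
      apply abs_of_pos; positivity
    rw [hden, div_le_iff₀ (by positivity)]
    have l1 : (1 - Real.cos h) ^ 2 ≤ h ^ 4 / 4 := hcsq
    have l2 : h ^ 4 / 4 ≤ h ^ 3 / 8 := by nlinarith [pow_pos hpos 3]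
    have l3 : h ^ 3 * (9/16) ≤ h ^ 3 * Real.cos h ^ 2 :=
      mul_le_mul_of_nonneg_left hc2 (pow_pos hpos 3).le
    have e3 : 2 * h ^ 2 * (h * Real.cos h ^ 2) = 2 * (h ^ 3 * Real.cos h ^ 2) := by ring
    rw [e3]; linarith [(pow_pos hpos 3).le]
  rw [hid]
  have hpq : |p * q| ≤ (p ^ 2 + q ^ 2) / 2 := by
    rw [abs_le]; constructor <;> nlinarith [sq_nonneg (p + q), sq_nonneg (p - q)]
  calc |A * (p ^ 2 + q ^ 2) + B * (p * q)|
      ≤ |A * (p ^ 2 + q ^ 2)| + |B * (p * q)| := abs_add_le _ _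
    _ = |A| * (p ^ 2 + q ^ 2) + |B| * |p * q| := by
        rw [abs_mul, abs_mul, abs_of_nonneg (by positivity : (0:ℝ) ≤ p ^ 2 + q ^ 2)]
    _ ≤ h ^ 2 * (p ^ 2 + q ^ 2) + 2 * h ^ 2 * ((p ^ 2 + q ^ 2) / 2) := by
        have t1 : |A| * (p ^ 2 + q ^ 2) ≤ h ^ 2 * (p ^ 2 + q ^ 2) :=
          mul_le_mul_of_nonneg_right hAb (by positivity)
        have t2 : |B| * |p * q| ≤ 2 * h ^ 2 * ((p ^ 2 + q ^ 2) / 2) := by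
          apply mul_le_mul hBb hpq (abs_nonneg _) (by positivity)
        linarith
    _ = 2 * h ^ 2 * (p ^ 2 + q ^ 2) := by ring
end
end
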